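/- Let t be a target distribution with t_1 ≥ t_2 ≥ ⋯ and let M be a positive integer. Define the pre-approximation t̃_i = ⌊M t_i⌋/M, the errors e_i = t_i − t̃_i ≥ 0, and the integer L = M − Σ_i ⌊M t_i⌋ (so Σ_i e_i = L/M). Let 𝓛 be any set of L indices such that i ∈ 𝓛 and j ∉ 𝓛 imply e_i ≥ e_j, and define p by p_i = t̃_i + 1/M for i ∈ 𝓛 and p_i = t̃_i otherwise. Then p is an M-type probability distribution and ‖p − t‖₁ ≤ ‖q − t‖₁ for every M-type distribution q; i.e., p minimizes the variational distance to t among all M-type distributions. -/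

import Mathlib

/-- Variational distance `‖p − t‖₁ = Σ_i |p_i − t_i|`. -/
noncomputable def vd (p t : ℕ → ℝ) : ℝ := ∑' i, |p i - t i|

/-- A target distribution: a probability distribution on the positive integers
(indexed here by ℕ) with nonincreasing entries. -/
def IsTargetDist (t : ℕ → ℝ) : Prop :=
  (∀ i, 0 ≤ t i) ∧ (∀ i, t (i + 1) ≤ t i) ∧ HasSum t 1

/-- An `M`-type distribution: every entry is `c_i / M` for a nonnegative integer
`c_i ≤ M`, and the entries sum to one. -/
def IsMType (M : ℕ) (p : ℕ → ℝ) : Prop :=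
  HasSum p 1 ∧ ∃ c : ℕ → ℕ, (∀ i, c i ≤ M) ∧ ∀ i, p i = (c i : ℝ) / M

lemma comb_aux (M : ℕ) (hM : 0 < M) (e : ℕ → ℝ) (h0 : ∀ i, 0 ≤ e i)
    (h1 : ∀ i, e i ≤ 1 / M) (A 𝓛 : Finset ℕ)
    (hmax : ∀ i ∈ 𝓛, ∀ j ∉ 𝓛, e j ≤ e i)
    (S : ℝ) (hSA : (A.card : ℝ) ≤ S) (hSL : (𝓛.card : ℝ) ≤ S) :
    ∑ i ∈ A, e i - ∑ i ∈ 𝓛, e i ≤ S / M - (𝓛.card : ℝ) / M := by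
  have hM0 : (0:ℝ) < M := Nat.cast_pos.2 hM
  have hCB : ∀ i ∈ A \ 𝓛, ∀ j ∈ 𝓛 \ A, e i ≤ e j := by
    intro i hi j hj
    exact hmax j (Finset.mem_sdiff.1 hj).1 i (Finset.mem_sdiff.1 hi).2
  have key : ∀ f : ℕ → ℝ, ∑ i ∈ A, f i - ∑ i ∈ 𝓛, f i
      = ∑ i ∈ A \ 𝓛, f i - ∑ i ∈ 𝓛 \ A, f i := by
    intro f
    have h1 := Finset.sum_inter_add_sum_sdiff A 𝓛 f
    have h2 := Finset.sum_inter_add_sum_sdiff 𝓛 A f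
    rw [Finset.inter_comm] at h2
    linarith
  have hsum := key e
  have hcardkey := key (fun _ => (1:ℝ))
  simp only [Finset.sum_const, nsmul_eq_mul, mul_one] at hcardkey
  have hSge0 : 0 ≤ S / M - (𝓛.card:ℝ)/M := by
    rw [sub_nonneg]; gcongr
  have hAS : (A.card:ℝ)/M - (𝓛.card:ℝ)/M ≤ S/M - (𝓛.card:ℝ)/M := by gcongr
  rw [hsum]
  rcases (𝓛 \ A).eq_empty_or_nonempty with hB | hB
  · rw [hB, Finset.sum_empty]
    have hC : ∑ i ∈ A \ 𝓛, e i ≤ ((A \ 𝓛).card : ℝ) * (1/M) := by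
      have := Finset.sum_le_card_nsmul (A \ 𝓛) e (1/M) (fun i _ => h1 i)
      simpa using this
    have hBc : ((𝓛 \ A).card : ℝ) = 0 := by rw [hB]; simp
    rw [hB, Finset.card_empty] at hcardkey
    -- hcardkey : (A\𝓛).card - 0 = A.card - 𝓛.card
    have : ((A \ 𝓛).card : ℝ) * (1/M) ≤ S/M - (𝓛.card:ℝ)/M := by
      push_cast at hcardkey
      have : ((A \ 𝓛).card : ℝ) = (A.card:ℝ) - 𝓛.card := by linarith
      rw [this]
      have e1 : ((A.card:ℝ) - 𝓛.card) * (1/M) = (A.card:ℝ)/M - (𝓛.card:ℝ)/M := by ring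
      rw [e1]
      exact hAS
    linarith
  · obtain ⟨j₀, hj₀B, hj₀min⟩ := (𝓛 \ A).exists_min_image e hB
    have hm0 : 0 ≤ e j₀ := h0 j₀
    have hC : ∑ i ∈ A \ 𝓛, e i ≤ ((A \ 𝓛).card : ℝ) * e j₀ := by
      have := Finset.sum_le_card_nsmul (A \ 𝓛) e (e j₀) (fun i hi => hCB i hi j₀ hj₀B)
      simpa using this
    have hBb : ((𝓛 \ A).card : ℝ) * e j₀ ≤ ∑ i ∈ 𝓛 \ A, e i := by
      have := Finset.card_nsmul_le_sum (𝓛 \ A) e (e j₀) (fun i hi => hj₀min i hi)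
      simpa using this
    have hdiff : ∑ i ∈ A \ 𝓛, e i - ∑ i ∈ 𝓛 \ A, e i
        ≤ (((A \ 𝓛).card : ℝ) - ((𝓛 \ A).card : ℝ)) * e j₀ := by
      rw [sub_mul]; linarith
    rcases le_total ((A.card:ℝ)) (𝓛.card:ℝ) with h | h
    · have hle0 : (((A \ 𝓛).card : ℝ) - ((𝓛 \ A).card : ℝ)) ≤ 0 := by linarith
      have : (((A \ 𝓛).card : ℝ) - ((𝓛 \ A).card : ℝ)) * e j₀ ≤ 0 :=
        mul_nonpos_of_nonpos_of_nonneg hle0 hm0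
      linarith
    · have hge0 : (0:ℝ) ≤ (((A \ 𝓛).card : ℝ) - ((𝓛 \ A).card : ℝ)) := by linarith
      have h2 : (((A \ 𝓛).card : ℝ) - ((𝓛 \ A).card : ℝ)) * e j₀
          ≤ (((A \ 𝓛).card : ℝ) - ((𝓛 \ A).card : ℝ)) * (1/M) :=
        mul_le_mul_of_nonneg_left (h1 j₀) hge0
      have h3 : (((A \ 𝓛).card : ℝ) - ((𝓛 \ A).card : ℝ)) * (1/M)
          = (A.card:ℝ)/M - (𝓛.card:ℝ)/M := by
        rw [← hcardkey]; ring
      linarith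

/-- rounding down to the pre-approximation `⌊M t_i⌋ / M` and adding a
unit mass `1/M` to a set `𝓛` of `L` indices having the largest errors yields an
`M`-type distribution minimizing the variational distance to `t` among all
`M`-type distributions. -/
theorem stmt2 (t : ℕ → ℝ) (ht : IsTargetDist t) (M : ℕ) (hM : 0 < M)
    (e : ℕ → ℝ) (he : ∀ i, e i = t i - ((⌊(M : ℝ) * t i⌋ : ℝ)) / M)
    (L : ℕ) (hL : (L : ℝ) = (M : ℝ) - ∑' i, ((⌊(M : ℝ) * t i⌋ : ℝ)))
    (𝓛 : Finset ℕ) (hcard : 𝓛.card = L)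
    (hmax : ∀ i ∈ 𝓛, ∀ j ∉ 𝓛, e j ≤ e i)
    (p : ℕ → ℝ)
    (hp : ∀ i, p i = if i ∈ 𝓛 then ((⌊(M : ℝ) * t i⌋ : ℝ)) / M + 1 / M
                     else ((⌊(M : ℝ) * t i⌋ : ℝ)) / M) :
    IsMType M p ∧ ∀ q, IsMType M q → vd p t ≤ vd q t := by
  obtain ⟨ht0, htmono, htsum⟩ := ht
  have hM0 : (0:ℝ) < M := Nat.cast_pos.2 hM
  set g : ℕ → ℤ := fun i => ⌊(M:ℝ) * t i⌋ with hgdef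
  have hg0 : ∀ i, 0 ≤ g i := fun i => Int.floor_nonneg.2 (mul_nonneg (Nat.cast_pos.2 hM).le (ht0 i))
  have hfle : ∀ i, (g i : ℝ)/M ≤ t i := by
    intro i
    rw [div_le_iff₀ hM0, mul_comm]
    exact Int.floor_le ((M:ℝ) * t i)
  have he0 : ∀ i, 0 ≤ e i := fun i => by rw [he]; push_cast; linarith [hfle i]
  have he1 : ∀ i, e i ≤ 1/M := by
    intro i
    rw [he, sub_le_iff_le_add]
    rw [← add_div, le_div_iff₀ hM0, mul_comm]
    have := Int.lt_floor_add_one ((M:ℝ)*t i)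
    push_cast
    linarith
  have hts : Summable t := htsum.summable
  have hsg' : Summable (fun i => (g i:ℝ)/M) :=
    Summable.of_nonneg_of_le
      (fun i => div_nonneg (by exact_mod_cast hg0 i) hM0.le) hfle hts
  have hsg : Summable (fun i => (g i:ℝ)) := by
    have h := hsg'.mul_left (M:ℝ)
    have he' : (fun i => (M:ℝ) * ((g i:ℝ)/M)) = fun i => (g i:ℝ) := by
      funext i; field_simp
    rwa [he'] at h
  have htg : ∑' i, (g i:ℝ) = (M:ℝ) - L := by
    have : ∑' i, (g i:ℝ) = ∑' i, ((⌊(M : ℝ) * t i⌋ : ℝ)) := rfl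
    rw [this]; linarith
  have hgsum : HasSum (fun i => (g i:ℝ)/M) (((M:ℝ) - L)/M) := by
    have h := hsg.hasSum
    rw [htg] at h
    exact h.div_const M
  have hesum : HasSum e ((L:ℝ)/M) := by
    have h := htsum.sub hgsum
    have hv : (1:ℝ) - ((M:ℝ) - L)/M = (L:ℝ)/M := by field_simp; ring
    rw [hv] at h
    rw [show e = fun b => t b - (g b:ℝ)/M from funext he]
    exact h
  have hind : HasSum (fun i => if i ∈ 𝓛 then (1:ℝ)/M else 0) ((L:ℝ)/M) := by
    have h := hasSum_sum_of_ne_finset_zero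
      (L := SummationFilter.unconditional ℕ) (s := 𝓛) (f := fun i => if i ∈ 𝓛 then (1:ℝ)/M else 0)
      (by intro b hb; simp [hb])
    have hv : ∑ b ∈ 𝓛, (if b ∈ 𝓛 then (1:ℝ)/M else 0) = (L:ℝ)/M := by
      rw [Finset.sum_congr rfl (fun i hi => if_pos hi), Finset.sum_const, hcard]
      simp [nsmul_eq_mul]; ring
    rwa [hv] at h
  have hpsum : HasSum p 1 := by
    have h := hgsum.add hind
    have hv : ((M:ℝ) - L)/M + (L:ℝ)/M = 1 := by field_simp; ring
    rw [hv] at h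
    convert h using 1
    funext i; rw [hp i]; by_cases hi : i ∈ 𝓛 <;> simp [hi, hgdef]
  have hgle : ∀ i, (g i : ℝ) ≤ (M:ℝ) - L := by
    intro i
    have h := Summable.le_tsum hsg i (fun j _ => by exact_mod_cast hg0 j)
    rwa [htg] at h
  have hptype : IsMType M p := by
    refine ⟨hpsum, fun i => (g i).toNat + (if i ∈ 𝓛 then 1 else 0), ?_, ?_⟩
    · intro i
      have hcast : ((g i).toNat : ℝ) = (g i : ℝ) := by
        exact_mod_cast congrArg (fun z : ℤ => (z:ℝ)) (Int.toNat_of_nonneg (hg0 i))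
      by_cases hi : i ∈ 𝓛
      · have hL1 : 1 ≤ L := by
          rw [← hcard]; exact Finset.card_pos.2 ⟨i, hi⟩
        have h1 : ((g i).toNat : ℝ) + 1 ≤ (M:ℝ) := by
          have := hgle i
          have hL1' : (1:ℝ) ≤ L := by exact_mod_cast hL1
          linarith [hcast]
        simp only [hi, if_pos]
        exact_mod_cast h1
      · simp only [hi, if_neg, not_false_iff, add_zero]
        have h1 : ((g i).toNat : ℝ) ≤ (M:ℝ) := by
          have := hgle i
          have : (0:ℝ) ≤ L := Nat.cast_nonneg L
          linarith [hcast, hgle i]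
        exact_mod_cast h1
    · intro i
      have hcast : ((g i).toNat : ℝ) = (g i : ℝ) := by
        exact_mod_cast congrArg (fun z : ℤ => (z:ℝ)) (Int.toNat_of_nonneg (hg0 i))
      have hgg : (g i : ℝ) = ((⌊(M : ℝ) * t i⌋ : ℝ)) := rfl
      rw [hp i]
      by_cases hi : i ∈ 𝓛 <;> simp only [hi, if_pos, if_neg, not_false_iff] <;>
        push_cast <;> rw [← hgg, hcast] <;> ring
  refine ⟨hptype, ?_⟩
  rintro q ⟨hq, c, hcM, hqc⟩
  set d : ℕ → ℤ := fun i => (c i : ℤ) - g i with hddef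
  have hgg : ∀ i, (g i : ℝ) = ((⌊(M : ℝ) * t i⌋ : ℝ)) := fun i => rfl
  have hqt : ∀ i, q i - t i = (d i : ℝ)/M - e i := by
    intro i
    rw [hqc i, he i]
    have hd : ((d i : ℤ) : ℝ) = (c i : ℝ) - (g i : ℝ) := by simp only [hddef]; push_cast; ring
    rw [hd, ← hgg i]
    ring
  have hq0 : Filter.Tendsto q Filter.atTop (nhds 0) := hq.summable.tendsto_atTop_zero
  have hgq : Filter.Tendsto (fun i => (g i:ℝ)/M) Filter.atTop (nhds 0) :=
    hsg'.tendsto_atTop_zero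
  have hdt : Filter.Tendsto (fun i => (d i:ℝ)) Filter.atTop (nhds 0) := by
    have heq : (fun i => (d i:ℝ)) = fun i => (q i - (g i:ℝ)/M) * M := by
      funext i
      rw [hqc i]
      simp only [hddef]
      push_cast
      field_simp
    rw [heq]
    have h := (hq0.sub hgq).mul_const (M:ℝ)
    simpa using h
  obtain ⟨N, hN'⟩ := Metric.tendsto_atTop.1 hdt 1 one_pos
  have hN : ∀ i, N ≤ i → d i = 0 := by
    intro i hi
    have h := hN' i hi
    rw [Real.dist_eq, sub_zero] at h
    have habs : |d i| < 1 := by exact_mod_cast h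
    have h2 := abs_lt.1 habs
    omega
  set F : Finset ℕ := Finset.range N ∪ 𝓛 with hFdef
  have hFz : ∀ i ∉ F, d i = 0 := by
    intro i hi
    apply hN
    by_contra hlt
    exact hi (Finset.mem_union_left _ (Finset.mem_range.2 (by omega)))
  have h𝓛F : 𝓛 ⊆ F := Finset.subset_union_right
  have hdsum : HasSum (fun i => (d i:ℝ)) (L:ℝ) := by
    have h := (hq.sub hgsum).mul_right (M:ℝ)
    have hv : ((1:ℝ) - ((M:ℝ) - L)/M) * M = (L:ℝ) := by field_simp; ring
    rw [hv] at h
    rw [show (fun i => (d i:ℝ)) = fun i => (q i - (g i:ℝ)/M) * M from ?_]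
    · exact h
    funext i
    rw [hqc i]
    simp only [hddef]
    push_cast
    field_simp
  have hdF : ∑ i ∈ F, (d i : ℝ) = (L:ℝ) := by
    rw [← tsum_eq_sum (L := SummationFilter.unconditional ℕ) (fun b hb => by rw [hFz b hb]; norm_num), hdsum.tsum_eq]
  -- vd p t
  have habs_p : ∀ i, |p i - t i| = e i + (if i ∈ 𝓛 then 1/M - 2 * e i else 0) := by
    intro i
    by_cases hi : i ∈ 𝓛
    · have hv : p i - t i = 1/M - e i := by
        rw [hp i, he i, if_pos hi, ← hgg i]; ring
      rw [hv, abs_of_nonneg (by linarith [he1 i]), if_pos hi]; ring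
    · have hv : p i - t i = -(e i) := by
        rw [hp i, he i, if_neg hi, ← hgg i]; ring
      rw [hv, abs_neg, abs_of_nonneg (he0 i), if_neg hi]; ring
  have hψp : ∀ i ∉ 𝓛, (if i ∈ 𝓛 then 1/M - 2 * e i else (0:ℝ)) = 0 := by
    intro i hi; rw [if_neg hi]
  have hvdp : vd p t = (L:ℝ)/M + ∑ i ∈ 𝓛, (1/M - 2 * e i) := by
    unfold vd
    have heq : (fun i => |p i - t i|) =
        fun i => e i + (if i ∈ 𝓛 then 1/M - 2 * e i else 0) := funext habs_p
    rw [heq, Summable.tsum_add hesum.summable (summable_of_ne_finset_zero hψp),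
      hesum.tsum_eq, tsum_eq_sum hψp,
      Finset.sum_congr rfl (fun i hi => if_pos hi)]
  -- vd q t
  set ψ : ℕ → ℝ := fun i => if 1 ≤ d i then (d i:ℝ)/M - 2 * e i else -((d i:ℝ)/M)
    with hψdef
  have hψpos : ∀ i, 1 ≤ d i → ψ i = (d i:ℝ)/M - 2 * e i := fun i h => if_pos h
  have hψneg : ∀ i, ¬ 1 ≤ d i → ψ i = -((d i:ℝ)/M) := fun i h => if_neg h
  have habs_q : ∀ i, |q i - t i| = e i + ψ i := by
    intro i
    have hq' := hqt i
    by_cases hσ : 1 ≤ d i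
    · have hd1 : (1:ℝ) ≤ (d i:ℝ) := by exact_mod_cast hσ
      have hnn : 0 ≤ q i - t i := by
        rw [hq']
        have h1 : (1:ℝ)/M ≤ (d i:ℝ)/M := by gcongr
        linarith [he1 i]
      rw [abs_of_nonneg hnn, hq', hψpos i hσ]; ring
    · have hd0 : (d i : ℝ) ≤ 0 := by exact_mod_cast (by omega : d i ≤ 0)
      have hnp : q i - t i ≤ 0 := by
        rw [hq']
        have h1 : (d i:ℝ)/M ≤ 0 := div_nonpos_of_nonpos_of_nonneg hd0 hM0.le
        linarith [he0 i]
      rw [abs_of_nonpos hnp, hq', hψneg i hσ]; ring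
  have hψz : ∀ i ∉ F, ψ i = 0 := by
    intro i hi
    rw [hψneg i (by rw [hFz i hi]; omega), hFz i hi]
    norm_num
  have hvdq : vd q t = (L:ℝ)/M + ∑ i ∈ F, ψ i := by
    unfold vd
    have heq : (fun i => |q i - t i|) = fun i => e i + ψ i := funext habs_q
    rw [heq, Summable.tsum_add hesum.summable (summable_of_ne_finset_zero hψz),
      hesum.tsum_eq, tsum_eq_sum hψz]
  -- finite reduction
  rw [hvdp, hvdq]
  set A : Finset ℕ := F.filter (fun i => 1 ≤ d i) with hAdef
  have hAF : A ⊆ F := Finset.filter_subset _ _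
  set S : ℝ := ∑ i ∈ A, (d i:ℝ) with hSdef
  have hsplitd : ∑ i ∈ F \ A, (d i:ℝ) + S = (L:ℝ) := by
    rw [hSdef, Finset.sum_sdiff hAF, hdF]
  have hdneg : ∀ i ∈ F \ A, (d i : ℝ) ≤ 0 := by
    intro i hi
    obtain ⟨hiF, hiA⟩ := Finset.mem_sdiff.1 hi
    have hni : ¬ (1 ≤ d i) := fun hcon => hiA (Finset.mem_filter.2 ⟨hiF, hcon⟩)
    exact_mod_cast (by omega : d i ≤ 0)
  have hSL' : (L:ℝ) ≤ S := by
    have h := Finset.sum_nonpos hdneg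
    linarith
  have hSA : (A.card : ℝ) ≤ S := by
    have h := Finset.card_nsmul_le_sum A (fun i => (d i:ℝ)) 1
      (fun i hi => by
        have h1 : 1 ≤ d i := (Finset.mem_filter.1 hi).2
        show (1:ℝ) ≤ (d i:ℝ)
        exact_mod_cast h1)
    simpa using h
  have hcL : (𝓛.card : ℝ) = (L:ℝ) := by exact_mod_cast congrArg Nat.cast hcard
  have hkey := comb_aux M hM e he0 he1 A 𝓛 hmax S hSA (by rw [hcL]; exact hSL')
  rw [hcL] at hkey
  -- compute the finite sums
  have hA : ∑ i ∈ A, ψ i = S/M - 2 * ∑ i ∈ A, e i := by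
    rw [Finset.sum_congr rfl (fun i hi => hψpos i (Finset.mem_filter.1 hi).2),
      Finset.sum_sub_distrib, ← Finset.sum_div, ← Finset.mul_sum, hSdef]
  have hFA : ∑ i ∈ F \ A, ψ i = -(((L:ℝ) - S)/M) := by
    rw [Finset.sum_congr rfl (fun i hi => hψneg i (fun hcon =>
        (Finset.mem_sdiff.1 hi).2 (Finset.mem_filter.2 ⟨(Finset.mem_sdiff.1 hi).1, hcon⟩)))]
    have h3 : ∑ i ∈ F \ A, (d i:ℝ) = (L:ℝ) - S := by linarith [hsplitd]
    rw [Finset.sum_neg_distrib, ← Finset.sum_div, h3]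
  have hFψ : ∑ i ∈ F, ψ i = 2 * (S/M) - (L:ℝ)/M - 2 * ∑ i ∈ A, e i := by
    have h1 : ∑ i ∈ F \ A, ψ i + ∑ i ∈ A, ψ i = ∑ i ∈ F, ψ i :=
      Finset.sum_sdiff hAF
    have h2 : ((L:ℝ) - S)/M = (L:ℝ)/M - S/M := sub_div _ _ _
    linarith [hA, hFA]
  have h𝓛sum : ∑ i ∈ 𝓛, (1/(M:ℝ) - 2 * e i) = (L:ℝ)/M - 2 * ∑ i ∈ 𝓛, e i := by
    rw [Finset.sum_sub_distrib, ← Finset.mul_sum, Finset.sum_const, hcard]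
    simp [nsmul_eq_mul]
    ring
  rw [hFψ, h𝓛sum]
  linarith [hkey]
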